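/- Let G be a finite simple graph with positive integer vertex weights w, let S ⊆ V(G), and let z ∈ S be such that at most one connected component of G − S contains a neighbor of z. Then w(S ∖ {z}) + max_{D ∈ cc(G − (S ∖ {z}))} w(D) ≤ w(S) + max_{D ∈ cc(G − S)} w(D). -/

import Mathlib

open SimpleGraph

variable {V : Type*}

/-- The vertex sets of the connected components of `G − S`
(the subgraph of `G` induced on the complement of `S`). -/
def ccSets (G : SimpleGraph V) (S : Set V) : Set (Set V) :=
  {D | ∃ c : (G.induce Sᶜ).ConnectedComponent, D = Subtype.val '' c.supp}

/-- The total weight of a set of vertices. -/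
noncomputable def wsum (w : V → ℕ) (A : Set V) : ℕ := ∑ᶠ v ∈ A, w v

/-- The weight of a heaviest connected component of `G − S` (`0` if there is none). -/
noncomputable def maxCC (G : SimpleGraph V) (w : V → ℕ) (S : Set V) : ℕ :=
  sSup (wsum w '' ccSets G S)

/-- inclusion hom between induced subgraphs -/
def inclHom (G : SimpleGraph V) {s t : Set V} (h : s ⊆ t) : G.induce s →g G.induce t :=
  ⟨Set.inclusion h, fun {a b} had => had⟩

lemma wsum_mono [Fintype V] (w : V → ℕ) {A B : Set V} (h : A ⊆ B) : wsum w A ≤ wsum w B := by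
  classical
  rw [wsum, wsum, ← Set.coe_toFinset A, ← Set.coe_toFinset B,
    finsum_mem_coe_finset, finsum_mem_coe_finset]
  exact Finset.sum_le_sum_of_subset (Set.toFinset_subset_toFinset.mpr h)

lemma wsum_insert [Fintype V] (w : V → ℕ) {A : Set V} {z : V} (h : z ∉ A) :
    wsum w (insert z A) = w z + wsum w A := by
  classical
  have h1 : wsum w (insert z A) = ∑ v ∈ (insert z A).toFinset, w v := by
    rw [wsum, ← finsum_mem_coe_finset, Set.coe_toFinset]
  have h2 : wsum w A = ∑ v ∈ A.toFinset, w v := by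
    rw [wsum, ← finsum_mem_coe_finset, Set.coe_toFinset]
  rw [h1, h2, Set.toFinset_insert, Finset.sum_insert (by simpa using h)]

/-- A walk in `G.induce t` avoiding `z` yields reachability in `G.induce s`,
when `s = t \ {z}` morally. -/
lemma walk_avoid (G : SimpleGraph V) {s t : Set V} {z : V} (hzt : z ∈ t)
    (hsub : ∀ v ∈ t, v ≠ z → v ∈ s) :
    ∀ {a b : t} (W : (G.induce t).Walk a b), (⟨z, hzt⟩ : t) ∉ W.support →
      ∀ (ha : (a : V) ∈ s) (hb : (b : V) ∈ s),
        (G.induce s).Reachable ⟨a, ha⟩ ⟨b, hb⟩ := by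
  intro a b W
  induction W with
  | nil => intro _ ha hb; exact Reachable.refl _
  | @cons a x b h W ih =>
    intro hzW ha hb
    rw [SimpleGraph.Walk.support_cons] at hzW
    have hzW' : (⟨z, hzt⟩ : t) ∉ W.support := fun hh => hzW (List.mem_cons_of_mem _ hh)
    have hxz : x ≠ ⟨z, hzt⟩ := fun hh => hzW' (hh ▸ W.start_mem_support)
    have hx : (x : V) ∈ s := hsub _ x.2 (fun hh => hxz (Subtype.ext hh))
    have hadj : (G.induce s).Adj ⟨a, ha⟩ ⟨x, hx⟩ := h
    exact hadj.reachable.trans (ih hzW' hx hb)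

/-- From a walk starting at `z`, we can find a neighbor `u₀` of `z` in `s`
reachable (in `G.induce s`) to the endpoint. -/
lemma reach_from_z (G : SimpleGraph V) {s t : Set V} {z : V} (hzt : z ∈ t) (hzs : z ∉ s)
    (hsub : ∀ v ∈ t, v ≠ z → v ∈ s) :
    ∀ (n : ℕ) {b : t} (W : (G.induce t).Walk ⟨z, hzt⟩ b), W.length ≤ n →
      ∀ (hb : (b : V) ∈ s), ∃ u₀, ∃ (hu₀ : u₀ ∈ s), G.Adj z u₀ ∧
        (G.induce s).Reachable ⟨u₀, hu₀⟩ ⟨b, hb⟩ := by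
  classical
  intro n
  induction n with
  | zero =>
    intro b W hlen hb
    cases W with
    | nil => exact absurd hb hzs
    | cons h W' => simp at hlen
  | succ m ih =>
    intro b W hlen hb
    cases W with
    | nil => exact absurd hb hzs
    | @cons _ x _ h W' =>
      by_cases hzW : (⟨z, hzt⟩ : t) ∈ W'.support
      · have hlen' : (W'.dropUntil _ hzW).length ≤ m := by
          have := SimpleGraph.Walk.length_dropUntil_le W' hzW
          have h2 : W'.length ≤ m := by
            simpa [SimpleGraph.Walk.length_cons, Nat.succ_le_succ_iff] using hlen
          omega
        exact ih (W'.dropUntil _ hzW) hlen' hb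
      · have hxz : x ≠ ⟨z, hzt⟩ := fun hh => hzW (hh ▸ W'.start_mem_support)
        have hx : (x : V) ∈ s := hsub _ x.2 (fun hh => hxz (Subtype.ext hh))
        have hadj : G.Adj z (x : V) := h
        exact ⟨x, hx, hadj, walk_avoid G hzt hsub W' hzW hx hb⟩

/-- Removing a redundant vertex `z` (one such that at most one connected component of
`G − S` contains a neighbor of `z`) from the separator does not worsen the solution. -/
theorem remove_redundant_vertex [Fintype V] (G : SimpleGraph V) (w : V → ℕ)
    (hw : ∀ v, 0 < w v) (S : Set V) (z : V) (hz : z ∈ S)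
    (hred : {D ∈ ccSets G S | ∃ u ∈ D, G.Adj z u}.Subsingleton) :
    wsum w (S \ {z}) + maxCC G w (S \ {z}) ≤ wsum w S + maxCC G w S := by
  classical
  set S' : Set V := S \ {z} with hS'
  have hzS' : z ∈ S'ᶜ := by simp [hS']
  have hsub : Sᶜ ⊆ S'ᶜ := Set.compl_subset_compl.mpr Set.diff_subset
  have hmem : ∀ v ∈ S'ᶜ, v ≠ z → v ∈ Sᶜ := by
    intro v hv hvz
    simp only [hS', Set.mem_compl_iff, Set.mem_diff, Set.mem_singleton_iff, not_and, not_not] at hv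
    exact fun hvS => hvz (hv hvS)
  have hSsum : wsum w S = w z + wsum w S' := by
    have : S = insert z S' := by
      rw [hS', Set.insert_diff_singleton, Set.insert_eq_self.mpr hz]
    rw [this, wsum_insert w (by simp [hS'])]
  -- bounded above
  have hbdd : BddAbove (wsum w '' ccSets G S) := (Set.toFinite _).bddAbove
  -- key inequality
  have hkey : maxCC G w S' ≤ w z + maxCC G w S := by
    apply csSup_le'
    rintro _ ⟨D, ⟨c, rfl⟩, rfl⟩
    by_cases hzc : (⟨z, hzS'⟩ : ↥S'ᶜ) ∈ c.supp
    · -- the component containing z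
      have hc : c = (G.induce S'ᶜ).connectedComponentMk ⟨z, hzS'⟩ :=
        ((SimpleGraph.ConnectedComponent.mem_supp_iff _ _).mp hzc).symm
      set D' : Set V := Subtype.val '' c.supp with hD'
      have hzD : z ∈ D' := ⟨⟨z, hzS'⟩, hzc, rfl⟩
      have hsplit : wsum w D' = w z + wsum w (D' \ {z}) := by
        have : D' = insert z (D' \ {z}) := by
          rw [Set.insert_diff_singleton, Set.insert_eq_self.mpr hzD]
        rw [this, wsum_insert w (by simp)]
        rw [← this]
      rw [hsplit]
      apply Nat.add_le_add_left
      -- weight of D' \ {z} ≤ maxCC S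
      rcases Set.eq_empty_or_nonempty (D' \ {z}) with he | ⟨u, huD, huz⟩
      · rw [he]; simp [wsum]
      · -- every element of D' \ {z} lies in a single component of G - S
        -- helper: for v ∈ D' \ {z}, find neighbor v₀ of z with reachability
        have hfind : ∀ v ∈ D' \ {z}, ∃ (hv : v ∈ Sᶜ), ∃ v₀, ∃ (hv₀ : v₀ ∈ Sᶜ),
            G.Adj z v₀ ∧ (G.induce Sᶜ).Reachable ⟨v₀, hv₀⟩ ⟨v, hv⟩ := by
          rintro v ⟨⟨v', hv', rfl⟩, hvz⟩
          have hv : (v' : V) ∈ Sᶜ := hmem _ v'.2 (by simpa using hvz)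
          have hreach : (G.induce S'ᶜ).Reachable ⟨z, hzS'⟩ v' := by
            have := (SimpleGraph.ConnectedComponent.mem_supp_iff _ _).mp hv'
            rw [hc] at this
            exact (SimpleGraph.ConnectedComponent.exact this).symm
          obtain ⟨W⟩ := hreach
          obtain ⟨v₀, hv₀, hadj, hr⟩ :=
            reach_from_z G hzS' (by simpa using hz) hmem W.length W le_rfl hv
          exact ⟨hv, v₀, hv₀, hadj, hr⟩
        obtain ⟨hu, u₀, hu₀, hadju, hru⟩ := hfind u ⟨huD, huz⟩
        set cu := (G.induce Sᶜ).connectedComponentMk ⟨u₀, hu₀⟩ with hcu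
        have hDu : (Subtype.val '' cu.supp) ∈ {D ∈ ccSets G S | ∃ u ∈ D, G.Adj z u} := by
          refine ⟨⟨cu, rfl⟩, u₀, ⟨⟨u₀, hu₀⟩, ?_, rfl⟩, hadju⟩
          simp [hcu, SimpleGraph.ConnectedComponent.mem_supp_iff]
        have hsubDu : D' \ {z} ⊆ Subtype.val '' cu.supp := by
          intro v hvD
          obtain ⟨hv, v₀, hv₀, hadjv, hrv⟩ := hfind v hvD
          set cv := (G.induce Sᶜ).connectedComponentMk ⟨v₀, hv₀⟩ with hcv
          have hDv : (Subtype.val '' cv.supp) ∈ {D ∈ ccSets G S | ∃ u ∈ D, G.Adj z u} := by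
            refine ⟨⟨cv, rfl⟩, v₀, ⟨⟨v₀, hv₀⟩, ?_, rfl⟩, hadjv⟩
            simp [hcv, SimpleGraph.ConnectedComponent.mem_supp_iff]
          have heq := hred hDv hDu
          rw [← heq]
          exact ⟨⟨v, hv⟩, by
            simp only [SimpleGraph.ConnectedComponent.mem_supp_iff, hcv]
            exact (SimpleGraph.ConnectedComponent.sound hrv.symm), rfl⟩
        calc wsum w (D' \ {z}) ≤ wsum w (Subtype.val '' cu.supp) := wsum_mono w hsubDu
          _ ≤ maxCC G w S := le_csSup hbdd ⟨_, ⟨cu, rfl⟩, rfl⟩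
    · -- a component not containing z : it is a component of G - S
      obtain ⟨a, rfl⟩ := c.exists_rep
      have haz : a ≠ ⟨z, hzS'⟩ := by
        rintro rfl
        exact hzc ((SimpleGraph.ConnectedComponent.mem_supp_iff _ _).mpr rfl)
      have ha : (a : V) ∈ Sᶜ := hmem _ a.2 (fun hh => haz (Subtype.ext hh))
      have hDeq : Subtype.val '' ((G.induce S'ᶜ).connectedComponentMk a).supp
          = Subtype.val '' ((G.induce Sᶜ).connectedComponentMk ⟨a, ha⟩).supp := by
        ext x
        constructor
        · rintro ⟨y, hy, rfl⟩
          have hreach : (G.induce S'ᶜ).Reachable y a :=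
            SimpleGraph.ConnectedComponent.exact
              ((SimpleGraph.ConnectedComponent.mem_supp_iff _ _).mp hy)
          obtain ⟨W⟩ := hreach
          have hzW : (⟨z, hzS'⟩ : ↥S'ᶜ) ∉ W.support := by
            intro hmemW
            apply hzc
            apply (SimpleGraph.ConnectedComponent.mem_supp_iff _ _).mpr
            exact SimpleGraph.ConnectedComponent.sound ⟨W.dropUntil _ hmemW⟩
          have hyz : y ≠ ⟨z, hzS'⟩ := fun hh => hzW (hh ▸ W.start_mem_support)
          have hys : (y : V) ∈ Sᶜ := hmem _ y.2 (fun hh => hyz (Subtype.ext hh))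
          refine ⟨⟨y, hys⟩, ?_, rfl⟩
          rw [SimpleGraph.ConnectedComponent.mem_supp_iff]
          exact SimpleGraph.ConnectedComponent.sound (walk_avoid G hzS' hmem W hzW hys ha)
        · rintro ⟨y, hy, rfl⟩
          have hreach : (G.induce Sᶜ).Reachable y ⟨a, ha⟩ :=
            SimpleGraph.ConnectedComponent.exact
              ((SimpleGraph.ConnectedComponent.mem_supp_iff _ _).mp hy)
          have hreach' : (G.induce S'ᶜ).Reachable ⟨(y : V), hsub y.2⟩ a := by
            have := hreach.map (inclHom G hsub)
            convert this using 2 <;> rfl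
          refine ⟨⟨(y : V), hsub y.2⟩, ?_, rfl⟩
          rw [SimpleGraph.ConnectedComponent.mem_supp_iff]
          exact SimpleGraph.ConnectedComponent.sound hreach'
      rw [show (Quot.mk (G.induce S'ᶜ).Reachable a : (G.induce S'ᶜ).ConnectedComponent)
        = (G.induce S'ᶜ).connectedComponentMk a from rfl, hDeq]
      calc wsum w (Subtype.val '' ((G.induce Sᶜ).connectedComponentMk ⟨a, ha⟩).supp)
          ≤ maxCC G w S := le_csSup hbdd ⟨_, ⟨_, rfl⟩, rfl⟩
        _ ≤ w z + maxCC G w S := Nat.le_add_left _ _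
  rw [hSsum]
  omega
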